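/- If f(y) > 0 eventually and lim_{y→∞} y·f(y)/F̄(y) = 1/γ for some γ > 0, where F̄(y) = ∫_y^∞ f(u)du is a survival function with density f, then F̄ is regularly varying with index −1/γ, i.e., for every z > 0, lim_{y→∞} F̄(zy)/F̄(y) = z^{−1/γ}. -/

import Mathlib

open Filter Real

/-- If the survival function `F̄` (with density `f = -F̄'`) satisfies
`y·f(y)/F̄(y) → 1/γ` as `y → ∞`, with `f` eventually positive, then `F̄` is
regularly varying with index `-1/γ`. -/
theorem survival_regularly_varying
    (Fbar f : ℝ → ℝ) (γ : ℝ) (hγ : 0 < γ)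
    (hpos : ∀ y, 0 < y → 0 < Fbar y)
    (hle : ∀ y, 0 < y → Fbar y ≤ 1)
    (hderiv : ∀ y, 0 < y → HasDerivAt Fbar (-(f y)) y)
    (hdec : ∀ y z, 0 < y → y ≤ z → Fbar z ≤ Fbar y)
    (hlim0 : Tendsto Fbar atTop (nhds 0))
    (hfpos : ∀ᶠ y in atTop, 0 < f y)
    (hratio : Tendsto (fun y => y * f y / Fbar y) atTop (nhds (1 / γ))) :
    ∀ z : ℝ, 0 < z →
      Tendsto (fun y => Fbar (z * y) / Fbar y) atTop (nhds (z ^ (-(1 / γ)))) := by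
  intro z hz
  set L := 1 / γ with hLdef
  have hLpos : 0 < L := by positivity
  -- Key lemma: eventual bounds on the ratio from monotonicity of Fbar u * u^r
  have key : ∀ p q : ℝ, p < L → L < q →
      ∀ᶠ y in atTop, min (z ^ (-p)) (z ^ (-q)) ≤ Fbar (z * y) / Fbar y ∧
        Fbar (z * y) / Fbar y ≤ max (z ^ (-p)) (z ^ (-q)) := by
    intro p q hp hq
    have hev : ∀ᶠ u in atTop, u * f u / Fbar u ∈ Set.Ioo p q :=
      hratio.eventually (Ioo_mem_nhds hp hq)
    obtain ⟨M₀, hM₀⟩ := eventually_atTop.1 hev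
    set M := max M₀ 1 with hMdef
    have hM1 : (1 : ℝ) ≤ M := le_max_right _ _
    have hMpos : (0 : ℝ) < M := lt_of_lt_of_le one_pos hM1
    have hbound : ∀ u, M ≤ u → p < u * f u / Fbar u ∧ u * f u / Fbar u < q := by
      intro u hu
      exact hM₀ u (le_trans (le_max_left _ _) hu)
    have hderiv' : ∀ r : ℝ, ∀ u : ℝ, M < u →
        HasDerivAt (fun v => Fbar v * v ^ r) (u ^ (r - 1) * (r * Fbar u - u * f u)) u := by
      intro r u hu
      have hu0 : (0 : ℝ) < u := lt_trans hMpos hu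
      have h1 := (hderiv u hu0).mul (Real.hasDerivAt_rpow_const (p := r) (Or.inl hu0.ne'))
      convert h1 using 1
      · rfl
      · rfl
      · rfl
      have hup : u ^ r = u ^ (r - 1) * u := by
        rw [← Real.rpow_add_one hu0.ne' (r - 1)]
        ring_nf
      rw [hup]; ring
    have hcont : ∀ r : ℝ, ContinuousOn (fun v : ℝ => Fbar v * v ^ r) (Set.Ici M) := by
      intro r u hu
      have hu0 : (0 : ℝ) < u := lt_of_lt_of_le hMpos hu
      exact ((hderiv u hu0).continuousAt.mul
        (Real.continuousAt_rpow_const u r (Or.inl hu0.ne'))).continuousWithinAt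
    have hGp : StrictAntiOn (fun v : ℝ => Fbar v * v ^ p) (Set.Ici M) := by
      apply strictAntiOn_of_deriv_neg (convex_Ici M) (hcont p)
      intro u hu
      rw [interior_Ici] at hu
      have hu0 : (0 : ℝ) < u := lt_trans hMpos hu
      rw [(hderiv' p u hu).deriv]
      have hF : 0 < Fbar u := hpos u hu0
      have hb := (hbound u (le_of_lt hu)).1
      rw [lt_div_iff₀ hF] at hb
      have hneg : p * Fbar u - u * f u < 0 := by linarith
      exact mul_neg_of_pos_of_neg (Real.rpow_pos_of_pos hu0 _) hneg
    have hGq : StrictMonoOn (fun v : ℝ => Fbar v * v ^ q) (Set.Ici M) := by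
      apply strictMonoOn_of_deriv_pos (convex_Ici M) (hcont q)
      intro u hu
      rw [interior_Ici] at hu
      have hu0 : (0 : ℝ) < u := lt_trans hMpos hu
      rw [(hderiv' q u hu).deriv]
      have hF : 0 < Fbar u := hpos u hu0
      have hb := (hbound u (le_of_lt hu)).2
      rw [div_lt_iff₀ hF] at hb
      have hposq : 0 < q * Fbar u - u * f u := by linarith
      exact mul_pos (Real.rpow_pos_of_pos hu0 _) hposq
    have hy_ev : ∀ᶠ y in atTop, M ≤ y ∧ M ≤ z * y := by
      filter_upwards [eventually_ge_atTop (max M (M / z))] with y hy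
      refine ⟨le_trans (le_max_left _ _) hy, ?_⟩
      have h1 : M / z ≤ y := le_trans (le_max_right _ _) hy
      rw [div_le_iff₀ hz] at h1
      linarith
    filter_upwards [hy_ev] with y hy
    obtain ⟨hyM, hzyM⟩ := hy
    have hy0 : (0 : ℝ) < y := lt_of_lt_of_le hMpos hyM
    have hzy0 : (0 : ℝ) < z * y := lt_of_lt_of_le hMpos hzyM
    have hFy : 0 < Fbar y := hpos y hy0
    have hFzy : 0 < Fbar (z * y) := hpos _ hzy0
    have hconv : ∀ r : ℝ, Fbar (z * y) * (z * y) ^ r ≤ Fbar y * y ^ r →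
        Fbar (z * y) / Fbar y ≤ z ^ (-r) := by
      intro r h
      rw [Real.mul_rpow hz.le hy0.le] at h
      have hyp : (0 : ℝ) < y ^ r := Real.rpow_pos_of_pos hy0 r
      have hzp : (0 : ℝ) < z ^ r := Real.rpow_pos_of_pos hz r
      have h2 : Fbar (z * y) * z ^ r ≤ Fbar y := by
        have h3 : Fbar (z * y) * z ^ r * y ^ r ≤ Fbar y * y ^ r := by
          calc Fbar (z * y) * z ^ r * y ^ r = Fbar (z * y) * (z ^ r * y ^ r) := by ring
            _ ≤ Fbar y * y ^ r := h
        exact le_of_mul_le_mul_right h3 hyp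
      rw [div_le_iff₀ hFy, Real.rpow_neg hz.le, ← div_eq_inv_mul, le_div_iff₀ hzp]
      exact h2
    have hconv2 : ∀ r : ℝ, Fbar y * y ^ r ≤ Fbar (z * y) * (z * y) ^ r →
        z ^ (-r) ≤ Fbar (z * y) / Fbar y := by
      intro r h
      rw [Real.mul_rpow hz.le hy0.le] at h
      have hyp : (0 : ℝ) < y ^ r := Real.rpow_pos_of_pos hy0 r
      have hzp : (0 : ℝ) < z ^ r := Real.rpow_pos_of_pos hz r
      have h2 : Fbar y ≤ Fbar (z * y) * z ^ r := by
        have h3 : Fbar y * y ^ r ≤ Fbar (z * y) * z ^ r * y ^ r := by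
          calc Fbar y * y ^ r ≤ Fbar (z * y) * (z ^ r * y ^ r) := h
            _ = Fbar (z * y) * z ^ r * y ^ r := by ring
        exact le_of_mul_le_mul_right h3 hyp
      rw [le_div_iff₀ hFy, Real.rpow_neg hz.le, ← div_eq_inv_mul, div_le_iff₀ hzp]
      linarith
    rcases le_total y (z * y) with hle' | hle'
    · have hA : Fbar (z * y) * (z * y) ^ p ≤ Fbar y * y ^ p :=
        hGp.antitoneOn hyM hzyM hle'
      have hB : Fbar y * y ^ q ≤ Fbar (z * y) * (z * y) ^ q :=
        hGq.monotoneOn hyM hzyM hle'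
      exact ⟨le_trans (min_le_right _ _) (hconv2 q hB),
        le_trans (hconv p hA) (le_max_left _ _)⟩
    · have hA : Fbar y * y ^ p ≤ Fbar (z * y) * (z * y) ^ p :=
        hGp.antitoneOn hzyM hyM hle'
      have hB : Fbar (z * y) * (z * y) ^ q ≤ Fbar y * y ^ q :=
        hGq.monotoneOn hzyM hyM hle'
      exact ⟨le_trans (min_le_left _ _) (hconv2 p hA),
        le_trans (hconv q hB) (le_max_right _ _)⟩
  -- Now the squeeze argument
  rw [Metric.tendsto_nhds]
  intro δ hδ
  have hzfun : (fun t : ℝ => z ^ t) = fun t : ℝ => Real.exp (Real.log z * t) :=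
    funext fun t => Real.rpow_def_of_pos hz t
  have hzc : Continuous fun t : ℝ => z ^ t := by
    rw [hzfun]
    exact Real.continuous_exp.comp (continuous_const.mul continuous_id)
  have hc1 : Tendsto (fun ε : ℝ => z ^ (-(L - ε))) (nhds 0) (nhds (z ^ (-L))) := by
    have hlin : Tendsto (fun ε : ℝ => -(L - ε)) (nhds 0) (nhds (-L)) := by
      have : Continuous fun ε : ℝ => -(L - ε) := by continuity
      simpa using this.tendsto 0
    exact (hzc.tendsto (-L)).comp hlin
  have hc2 : Tendsto (fun ε : ℝ => z ^ (-(L + ε))) (nhds 0) (nhds (z ^ (-L))) := by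
    have hlin : Tendsto (fun ε : ℝ => -(L + ε)) (nhds 0) (nhds (-L)) := by
      have : Continuous fun ε : ℝ => -(L + ε) := by continuity
      simpa using this.tendsto 0
    exact (hzc.tendsto (-L)).comp hlin
  have hev1 : ∀ᶠ ε in nhds (0 : ℝ), |z ^ (-(L - ε)) - z ^ (-L)| < δ := by
    have := Metric.tendsto_nhds.mp hc1 δ hδ
    simpa [Real.dist_eq] using this
  have hev2 : ∀ᶠ ε in nhds (0 : ℝ), |z ^ (-(L + ε)) - z ^ (-L)| < δ := by
    have := Metric.tendsto_nhds.mp hc2 δ hδ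
    simpa [Real.dist_eq] using this
  have hev3 : ∀ᶠ ε in nhds (0 : ℝ), ε < L :=
    eventually_of_mem (IsOpen.mem_nhds isOpen_Iio hLpos) fun x hx => hx
  have hall := ((hev1.and hev2).and hev3).filter_mono
    (nhdsWithin_le_nhds (s := Set.Ioi (0 : ℝ)))
  obtain ⟨ε, ⟨⟨hd1, hd2⟩, hεL⟩, hε0⟩ :=
    (hall.and (eventually_mem_nhdsWithin (a := (0:ℝ)) (s := Set.Ioi (0:ℝ)))).exists
  have hε0' : (0 : ℝ) < ε := hε0
  have hkey := key (L - ε) (L + ε) (by linarith) (by linarith)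
  filter_upwards [hkey] with y hy
  obtain ⟨hlb, hub⟩ := hy
  set a := z ^ (-(L - ε)) with ha
  set b := z ^ (-(L + ε)) with hb
  set c := z ^ (-L) with hc
  have h1 : a - c < δ := lt_of_abs_lt hd1
  have h2 : b - c < δ := lt_of_abs_lt hd2
  have h3 : c - a < δ := lt_of_abs_lt (abs_sub_comm a c ▸ hd1)
  have h4 : c - b < δ := lt_of_abs_lt (abs_sub_comm b c ▸ hd2)
  rw [Real.dist_eq, abs_sub_lt_iff]
  constructor
  · have : Fbar (z * y) / Fbar y ≤ max a b := hub
    have hmax : max a b - c < δ := by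
      rcases max_cases a b with ⟨he, _⟩ | ⟨he, _⟩ <;> rw [he] <;> linarith
    linarith
  · have : min a b ≤ Fbar (z * y) / Fbar y := hlb
    have hmin : c - min a b < δ := by
      rcases min_cases a b with ⟨he, _⟩ | ⟨he, _⟩ <;> rw [he] <;> linarith
    linarith
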